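/- For each positive integer n, the characteristic polynomial of the n×n unit-primitive matrix A_n satisfies f_{A_n}(x) = det(xI_n − A_n) = (−1)^{⌊(n+1)/2⌋} · x^n · f_{T_n}((−1)^{n+1}/x) as rational functions (equivalently as polynomials after clearing denominators), where T_n is the matrix with (T_n)_{ij} = [|i−j|=1] + [(i,j)=(1,1)]. -/

import Mathlib

open Matrix

/-- The `n × n` unit-primitive matrix: entry `(i,j)` (1-based) is 1 iff `i + j ≤ n + 1`. -/
def A (n : ℕ) : Matrix (Fin n) (Fin n) ℝ :=
  Matrix.of fun i j => if (i : ℕ) + (j : ℕ) + 1 ≤ n then 1 else 0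

/-- The `n × n` matrix `T_n` with `(i,j)`-entry `[|i-j| = 1] + [(i,j) = (1,1)]`. -/
def Tmat (n : ℕ) : Matrix (Fin n) (Fin n) ℝ :=
  Matrix.of fun i j =>
    (if (i : ℕ) + 1 = j ∨ (j : ℕ) + 1 = i then 1 else 0) +
      (if (i : ℕ) = 0 ∧ (j : ℕ) = 0 then 1 else 0)

/-- explicit inverse of `A n` -/
def Cmat (n : ℕ) : Matrix (Fin n) (Fin n) ℝ :=
  Matrix.of fun i j =>
    (if (i : ℕ) + (j : ℕ) + 1 = n then 1 else 0) - (if (i : ℕ) + (j : ℕ) = n then 1 else 0)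

lemma A_mul_C (n : ℕ) : A n * Cmat n = 1 := by
  ext i k
  simp only [mul_apply, A, Cmat, of_apply, one_apply]
  have hk := k.isLt
  have hi := i.isLt
  have h1 : ∀ j : Fin n,
      (if (i : ℕ) + (j : ℕ) + 1 ≤ n then (1:ℝ) else 0) *
        ((if (j : ℕ) + (k : ℕ) + 1 = n then (1:ℝ) else 0) -
          (if (j : ℕ) + (k : ℕ) = n then 1 else 0))
      = (if (j : ℕ) = n - 1 - (k : ℕ) then (if (i:ℕ) ≤ (k:ℕ) then (1:ℝ) else 0) else 0)
        - (if (j : ℕ) = n - (k : ℕ) then (if (i:ℕ) + 1 ≤ (k:ℕ) then (1:ℝ) else 0) else 0) := by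
    intro j
    have hj := j.isLt
    split_ifs <;> first | omega | norm_num
  rw [Finset.sum_congr rfl fun j _ => h1 j, Finset.sum_sub_distrib]
  rw [Fin.sum_univ_eq_sum_range (fun m => if m = n - 1 - (k:ℕ) then (if (i:ℕ) ≤ (k:ℕ) then (1:ℝ) else 0) else 0)]
  rw [Fin.sum_univ_eq_sum_range (fun m => if m = n - (k:ℕ) then (if (i:ℕ) + 1 ≤ (k:ℕ) then (1:ℝ) else 0) else 0)]
  rw [Finset.sum_ite_eq' (Finset.range n), Finset.sum_ite_eq' (Finset.range n)]
  have : (i : ℕ) = (k : ℕ) ↔ i = k := by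
    exact ⟨fun h => Fin.ext h, fun h => by rw [h]⟩
  simp only [Finset.mem_range, ← this]
  split_ifs <;> first | omega | norm_num

lemma det_A : ∀ n, (A n).det = (-1 : ℝ) ^ (n / 2)
  | 0 => by simp
  | (n+1) => by
    rw [det_succ_column (A (n+1)) (Fin.last n)]
    have hval : ∀ i : Fin (n+1), A (n+1) i (Fin.last n) = if i = 0 then 1 else 0 := by
      intro i
      simp only [A, of_apply, Fin.val_last]
      have := i.isLt
      split_ifs with h1 h2 h2 <;> first | rfl | (exfalso; simp only [Fin.ext_iff, Fin.val_zero] at *; omega)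
    have hsum : ∑ i : Fin (n+1), (-1:ℝ) ^ ((i:ℕ) + (Fin.last n : ℕ)) * A (n+1) i (Fin.last n) *
        det ((A (n+1)).submatrix i.succAbove (Fin.last n).succAbove)
        = (-1:ℝ)^n * det ((A (n+1)).submatrix (Fin.succAbove 0) (Fin.last n).succAbove) := by
      rw [Finset.sum_eq_single (0 : Fin (n+1))]
      · simp [hval]
      · intro b _ hb; simp [hval, hb]
      · simp
    rw [hsum]
    have hsub : (A (n+1)).submatrix (Fin.succAbove 0) (Fin.last n).succAbove = A n := by
      ext i j
      simp only [submatrix_apply, Fin.succAbove_last, A, of_apply, Fin.succAbove_zero,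
        Fin.val_succ, Fin.coe_castSucc]
      split_ifs <;> first | rfl | omega
    rw [hsub, det_A n]
    rw [← pow_add]
    rcases Nat.even_or_odd n with ⟨m, rfl⟩ | ⟨m, rfl⟩
    · have h1 : (m + m) / 2 = m := by omega
      have h2 : (m + m + 1) / 2 = m := by omega
      rw [h1, h2]
      have : Even (m + m) := ⟨m, rfl⟩
      rw [pow_add, this.neg_one_pow]; ring
    · have h1 : (2*m+1) / 2 = m := by omega
      have h2 : (2*m+1+1) / 2 = m+1 := by omega
      rw [h1, h2, pow_add, pow_succ]
      have : Even (2*m) := ⟨m, by ring⟩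
      rw [this.neg_one_pow, pow_succ]; ring

def foldEquiv (n : ℕ) : Fin n ≃ Fin n where
  toFun k := ⟨if (n - 1 - (k:ℕ)) % 2 = 0 then (n - 1 - (k:ℕ)) / 2 else n - 1 - (n - 2 - (k:ℕ)) / 2,
    by have := k.isLt; split_ifs <;> omega⟩
  invFun i := ⟨if 2 * (i:ℕ) + 1 ≤ n then n - 1 - 2 * (i:ℕ) else 2 * (i:ℕ) - n,
    by have := i.isLt; split_ifs <;> omega⟩
  left_inv k := by
    have := k.isLt
    ext
    simp only []
    split_ifs <;> omega
  right_inv i := by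
    have := i.isLt
    ext
    simp only []
    split_ifs <;> omega

noncomputable def dval {n : ℕ} (k : Fin n) : ℝ := (-1) ^ (((k : ℕ) + 1) / 2)

lemma neg_one_pow_eq (e : ℕ) : (-1 : ℝ) ^ e = if e % 2 = 0 then 1 else -1 := by
  rcases Nat.even_or_odd e with h | h
  · rw [h.neg_one_pow, if_pos (Nat.even_iff.mp h)]
  · have he := Nat.odd_iff.mp h
    rw [h.neg_one_pow, if_neg (by omega)]

lemma foldEquiv_val {n : ℕ} (k : Fin n) :
    ((foldEquiv n k : Fin n) : ℕ) =
      if (n - 1 - (k:ℕ)) % 2 = 0 then (n - 1 - (k:ℕ)) / 2 else n - 1 - (n - 2 - (k:ℕ)) / 2 := rfl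

lemma foldEquiv_spec {n : ℕ} (k : Fin n) :
    2 * ((foldEquiv n k : Fin n) : ℕ) + (k : ℕ) + 1 = n ∨
      2 * ((foldEquiv n k : Fin n) : ℕ) = (k : ℕ) + n := by
  rw [foldEquiv_val]
  have := k.isLt
  split_ifs <;> omega

set_option maxHeartbeats 1000000 in
lemma C_fold (n : ℕ) (k l : Fin n) :
    Cmat n (foldEquiv n k) (foldEquiv n l)
      = (-1:ℝ) ^ (n+1) * (dval k * (Tmat n k l * dval l)) := by
  have hk := k.isLt
  have hl := l.isLt
  have hvk := foldEquiv_spec k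
  have hvl := foldEquiv_spec l
  simp only [Cmat, Tmat, of_apply, dval, neg_one_pow_eq]
  generalize ((foldEquiv n k : Fin n) : ℕ) = p at hvk ⊢
  generalize ((foldEquiv n l : Fin n) : ℕ) = q at hvl ⊢
  split_ifs <;> first | omega | norm_num

lemma C_submatrix (n : ℕ) :
    (Cmat n).submatrix (foldEquiv n) (foldEquiv n)
      = (-1:ℝ) ^ (n+1) •
          (Matrix.diagonal dval * Tmat n * Matrix.diagonal dval) := by
  ext k l
  rw [submatrix_apply, C_fold]
  simp [Matrix.diagonal_mul, Matrix.mul_diagonal, mul_comm, mul_assoc, mul_left_comm]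

lemma D_mul_D (n : ℕ) :
    (Matrix.diagonal dval : Matrix (Fin n) (Fin n) ℝ) * Matrix.diagonal dval = 1 := by
  rw [diagonal_mul_diagonal]
  have : (fun k : Fin n => dval k * dval k) = fun _ => (1:ℝ) := by
    funext k
    rw [dval, ← pow_add]
    exact Even.neg_one_pow ⟨_, rfl⟩
  rw [this, diagonal_one]

/-- For each positive integer `n` and `x ≠ 0`:
`f_{A_n}(x) = (−1)^{⌊(n+1)/2⌋} x^n f_{T_n}((−1)^{n+1}/x)`. -/
theorem fA_eq_fT (n : ℕ) (hn : 0 < n) (x : ℝ) (hx : x ≠ 0) :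
    (x • (1 : Matrix (Fin n) (Fin n) ℝ) - A n).det =
      (-1 : ℝ) ^ ((n + 1) / 2) * x ^ n *
        (((-1 : ℝ) ^ (n + 1) / x) • (1 : Matrix (Fin n) (Fin n) ℝ) - Tmat n).det := by
  set D : Matrix (Fin n) (Fin n) ℝ := Matrix.diagonal dval with hD
  set s : ℝ := (-1:ℝ) ^ (n+1) with hs
  -- step 1 : factor out A
  have key : A n * (x • Cmat n - 1) = x • (1 : Matrix (Fin n) (Fin n) ℝ) - A n := by
    rw [Matrix.mul_sub, Matrix.mul_smul, A_mul_C, Matrix.mul_one]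
  have h1 : (x • (1 : Matrix (Fin n) (Fin n) ℝ) - A n).det
      = (A n).det * (x • Cmat n - 1).det := by
    rw [← det_mul, key]
  -- step 2 : conjugate by the fold permutation
  have h2 : (x • Cmat n - 1).det
      = ((x • Cmat n - 1).submatrix (foldEquiv n) (foldEquiv n)).det :=
    (det_submatrix_equiv_self _ _).symm
  have h3 : (x • Cmat n - 1).submatrix (foldEquiv n) (foldEquiv n)
      = x • ((Cmat n).submatrix (foldEquiv n) (foldEquiv n)) - 1 := by
    ext k l
    simp [submatrix_apply, Matrix.sub_apply, Matrix.smul_apply, Matrix.one_apply,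
      (foldEquiv n).injective.eq_iff]
  -- step 3 : conjugate by D
  have h4 : x • ((Cmat n).submatrix (foldEquiv n) (foldEquiv n)) - 1
      = D * ((s * x) • Tmat n - 1) * D := by
    rw [C_submatrix, Matrix.mul_sub, Matrix.sub_mul, Matrix.mul_one, D_mul_D,
      Matrix.mul_smul, Matrix.smul_mul, smul_smul, ← hD, ← hs]
    rw [mul_comm x s]
  -- step 4 : rescale
  have hscalar : (-(s * x)) * (s / x) = -1 := by
    have hss : s * s = 1 := by
      rw [hs, ← pow_add]
      exact Even.neg_one_pow ⟨n+1, rfl⟩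
    field_simp
    linear_combination -hss
  have h5 : (s * x) • Tmat n - 1
      = (-(s * x)) • ((s / x) • (1 : Matrix (Fin n) (Fin n) ℝ) - Tmat n) := by
    rw [smul_sub, smul_smul, hscalar, neg_one_smul, neg_smul, sub_neg_eq_add]
    exact sub_eq_neg_add _ _
  -- assemble dets
  have hdet4 : (D * ((s * x) • Tmat n - 1) * D).det = ((s * x) • Tmat n - 1).det := by
    rw [det_mul, det_mul]
    have : D.det * D.det = 1 := by rw [← det_mul, D_mul_D, det_one]
    calc D.det * ((s * x) • Tmat n - 1).det * D.det
        = ((s * x) • Tmat n - 1).det * (D.det * D.det) := by ring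
      _ = ((s * x) • Tmat n - 1).det := by rw [this, mul_one]
  have hdet5 : ((s * x) • Tmat n - 1).det
      = (-(s * x)) ^ n * ((s / x) • (1 : Matrix (Fin n) (Fin n) ℝ) - Tmat n).det := by
    rw [h5, det_smul, Fintype.card_fin]
  rw [h1, h2, h3, h4, hdet4, hdet5, det_A]
  -- final sign bookkeeping
  have hpow : (-(s * x)) ^ n = (-1:ℝ)^n * x ^ n := by
    have : -(s * x) = ((-1:ℝ) * s) * x := by ring
    rw [this, mul_pow, mul_pow, hs, ← pow_mul]
    have heven : Even ((n+1) * n) := by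
      rw [mul_comm]; exact Nat.even_mul_succ_self n
    rw [heven.neg_one_pow, mul_one]
  rw [hpow, hs]
  have hsign : (-1:ℝ) ^ (n / 2) * (-1:ℝ) ^ n = (-1:ℝ) ^ ((n+1)/2) := by
    rw [← pow_add]
    rcases Nat.even_or_odd n with ⟨m, rfl⟩ | ⟨m, rfl⟩
    · have e1 : (m + m) / 2 = m := by omega
      have e2 : (m + m) / 2 + (m + m) = m + (m + m) := by omega
      have e3 : (m + m + 1) / 2 = m := by omega
      rw [e2, e3, pow_add]
      have : Even (m + m) := ⟨m, rfl⟩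
      rw [this.neg_one_pow, mul_one]
    · have e2 : (2*m+1) / 2 + (2*m+1) = m + (2*m) + 1 := by omega
      have e3 : (2*m+1+1) / 2 = m + 1 := by omega
      rw [e2, e3, pow_succ, pow_add]
      have : Even (2*m) := ⟨m, by ring⟩
      rw [this.neg_one_pow, mul_one, pow_succ]
  calc (-1:ℝ) ^ (n / 2) * ((-1:ℝ)^n * x ^ n *
        (((-1:ℝ)^(n+1) / x) • (1 : Matrix (Fin n) (Fin n) ℝ) - Tmat n).det)
      = ((-1:ℝ) ^ (n / 2) * (-1:ℝ)^n) * x ^ n *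
        (((-1:ℝ)^(n+1) / x) • (1 : Matrix (Fin n) (Fin n) ℝ) - Tmat n).det := by ring
    _ = _ := by rw [hsign]
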